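/- Let R > 2r be positive integers and let μ be a probability measure on 𝒯_R(σ) that satisfies the (R,r)-restricted FMTP. Then for every ε > 0 there exists a probability measure μ̂ on 𝒯_R(σ) taking only rational values, having the same support as μ, satisfying the (R,r)-restricted FMTP, and such that the total variation distance ‖μ − μ̂‖_TV < ε. -/

import Mathlib

open FirstOrder Language Filter Topology Set
open MeasureTheory (Measure IsProbabilityMeasure)
open scoped ENNReal NNReal

namespace MapApprox

/-- The mapping signature: one unary function symbol and `c` unary relation symbols. -/
def mapLang (c : ℕ) : FirstOrder.Language :=
  ⟨fun n => match n with | 1 => Unit | _ => Empty,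
   fun n => match n with | 1 => Fin c | _ => Empty⟩

/-- The unary function symbol. -/
def fsym (c : ℕ) : (mapLang c).Functions 1 := Unit.unit

/-- The `k`-th unary relation symbol. -/
def rsym (c : ℕ) (k : Fin c) : (mapLang c).Relations 1 := k

/-- The interpretation of the function symbol in a mapping. -/
def fmap (c : ℕ) (M : Type*) [(mapLang c).Structure M] : M → M :=
  fun x => Structure.funMap (fsym c) ![x]

/-- The interpretation of the `k`-th unary relation in a mapping. -/
def relP (c : ℕ) {M : Type*} [(mapLang c).Structure M] (k : Fin c) (x : M) : Prop :=
  Structure.RelMap (rsym c k) ![x]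

/-- The Stone pairing of a formula with a structure equipped with a probability measure. -/
noncomputable def modPairing (c p : ℕ) (M : Type*) [MeasurableSpace M]
    [(mapLang c).Structure M] (ν : Measure M) (φ : (mapLang c).Formula (Fin p)) : ℝ :=
  ((Measure.pi fun _ : Fin p => ν) {v : Fin p → M | φ.Realize v}).toReal

/-- The Stone pairing of a formula with a finite structure (uniform measure). -/
noncomputable def finPairing (c p : ℕ) (F : Type*) [Fintype F]
    [(mapLang c).Structure F] (φ : (mapLang c).Formula (Fin p)) : ℝ :=
  (Set.ncard {v : Fin p → F | φ.Realize v} : ℝ) / (Fintype.card F : ℝ) ^ p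

/-- A structure on a measurable space is a modeling if every definable set is measurable. -/
def IsModeling (c : ℕ) (M : Type*) [MeasurableSpace M] [(mapLang c).Structure M] : Prop :=
  ∀ (p : ℕ) (φ : (mapLang c).Formula (Fin p)), MeasurableSet {v : Fin p → M | φ.Realize v}

/-- A measure is atomless if every singleton has measure zero. -/
def Atomless {M : Type*} [MeasurableSpace M] (ν : Measure M) : Prop :=
  ∀ v : M, ν {v} = 0

/-- The Finitary Mass Transport Principle for a map `f` and a measure `ν`. -/
def FMTP {X : Type*} [MeasurableSpace X] (f : X → X) (ν : Measure X) : Prop :=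
  ν {x | (f ⁻¹' {x}).Infinite} = 0 ∧
    ∀ A B : Set X, MeasurableSet A → MeasurableSet B →
      A ⊆ {x | (f ⁻¹' {x}).Finite} → B ⊆ {x | (f ⁻¹' {x}).Finite} →
      ν (A ∩ f ⁻¹' B) = ∫⁻ y in B, ((f ⁻¹' {y} ∩ A).encard : ℝ≥0∞) ∂ν

/-- The finite model property: every sentence satisfied by `M` has a finite model. -/
def HasFMP (c : ℕ) (M : Type*) [(mapLang c).Structure M] : Prop :=
  ∀ θ : (mapLang c).Sentence, Sentence.Realize M θ →
    ∃ (F : Type) (st : (mapLang c).Structure F), Finite F ∧ @Sentence.Realize _ F st θ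

/-- A bundled mapping modeling. -/
structure MMod (c : ℕ) where
  carrier : Type
  [ms : MeasurableSpace carrier]
  [sb : StandardBorelSpace carrier]
  [st : (mapLang c).Structure carrier]
  ν : Measure carrier
  prob : IsProbabilityMeasure ν
  borel : IsModeling c carrier

attribute [instance] MMod.ms MMod.sb MMod.st

/-- A bundled finite mapping. -/
structure FinMapping (c : ℕ) where
  carrier : Type
  [fin : Fintype carrier]
  [st : (mapLang c).Structure carrier]

attribute [instance] FinMapping.fin FinMapping.st

/-- `x` belongs to the `r`-ball of `u` in the Gaifman graph of a mapping with function `f`. -/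
def ballMem {M : Type*} (f : M → M) (r : ℕ) (u x : M) : Prop :=
  ∃ a b : ℕ, a + b ≤ r ∧ f^[a] u = f^[b] x

/-- The union of the `r`-balls around the entries of a tuple. -/
def tupleBall {M : Type*} {p : ℕ} (f : M → M) (r : ℕ) (u : Fin p → M) : Set M :=
  {x | ∃ i, ballMem f r (u i) x}

/-- `g` is an isomorphism between the `r`-balls of the tuples `u` and `v`. -/
def BallIso (c : ℕ) {p : ℕ} (r : ℕ) (M N : Type*)
    [(mapLang c).Structure M] [(mapLang c).Structure N]
    (u : Fin p → M) (v : Fin p → N) (g : M → N) : Prop :=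
  Set.BijOn g (tupleBall (fmap c M) r u) (tupleBall (fmap c N) r v) ∧
    (∀ i, g (u i) = v i) ∧
    (∀ x ∈ tupleBall (fmap c M) r u, ∀ k : Fin c, (relP c k x ↔ relP c k (g x))) ∧
    (∀ x ∈ tupleBall (fmap c M) r u, ∀ y ∈ tupleBall (fmap c M) r u,
      (fmap c M x = y ↔ fmap c N (g x) = g y))

/-- A formula is `r`-local if its satisfaction only depends on the isomorphism type of the
`r`-balls around its free variables. -/
def IsRLocal (c p : ℕ) (r : ℕ) (φ : (mapLang c).Formula (Fin p)) : Prop :=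
  ∀ (M N : Type) [(mapLang c).Structure M] [(mapLang c).Structure N]
    (u : Fin p → M) (v : Fin p → N) (g : M → N),
    BallIso c r M N u v g → (φ.Realize u ↔ φ.Realize v)

/-- A formula is local if it is `r`-local for some `r`. -/
def IsLocalFormula (c p : ℕ) (φ : (mapLang c).Formula (Fin p)) : Prop :=
  ∃ r, IsRLocal c p r φ

/-- A term is clean if it involves no composition of function symbols. -/
def TermClean {c : ℕ} {α : Type*} : (mapLang c).Term α → Prop
  | FirstOrder.Language.Term.var _ => True
  | FirstOrder.Language.Term.func _ ts => ∀ i, ∃ a, ts i = FirstOrder.Language.Term.var a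

/-- A formula is clean if all its terms are clean. -/
def FormulaClean {c : ℕ} {α : Type*} :
    ∀ {n : ℕ}, (mapLang c).BoundedFormula α n → Prop
  | _, FirstOrder.Language.BoundedFormula.falsum => True
  | _, FirstOrder.Language.BoundedFormula.equal t₁ t₂ => TermClean t₁ ∧ TermClean t₂
  | _, FirstOrder.Language.BoundedFormula.rel _ ts => ∀ i, TermClean (ts i)
  | _, FirstOrder.Language.BoundedFormula.imp φ ψ => FormulaClean φ ∧ FormulaClean ψ
  | _, FirstOrder.Language.BoundedFormula.all φ => FormulaClean φ

/-- The number of nested quantifiers of a formula. -/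
def qdepth {c : ℕ} {α : Type*} : ∀ {n : ℕ}, (mapLang c).BoundedFormula α n → ℕ
  | _, FirstOrder.Language.BoundedFormula.falsum => 0
  | _, FirstOrder.Language.BoundedFormula.equal _ _ => 0
  | _, FirstOrder.Language.BoundedFormula.rel _ _ => 0
  | _, FirstOrder.Language.BoundedFormula.imp φ ψ => max (qdepth φ) (qdepth ψ)
  | _, FirstOrder.Language.BoundedFormula.all φ => qdepth φ + 1

/-- The quantifier rank of a formula: the least number of nested quantifiers of a clean formula
logically equivalent to it. -/
noncomputable def qrank {c : ℕ} {α : Type*} (φ : (mapLang c).Formula α) : ℕ :=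
  sInf {d | ∃ ψ : (mapLang c).Formula α, FormulaClean ψ ∧ qdepth ψ ≤ d ∧
    ∀ (M : Type) [(mapLang c).Structure M] (w : α → M), (φ.Realize w ↔ ψ.Realize w)}

/-- `M ≡_r N` : `M` and `N` satisfy the same sentences of quantifier rank at most `r`. -/
def ElemEquiv (c r : ℕ) (M N : Type*) [(mapLang c).Structure M] [(mapLang c).Structure N] :
    Prop :=
  ∀ θ : (mapLang c).Sentence, qrank θ ≤ r →
    (Sentence.Realize M θ ↔ Sentence.Realize N θ)

/-- `dist_p^r(M,N)`: the supremum of `|⟨φ,M⟩ - ⟨φ,N⟩|` over formulas `φ` with `p` free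
variables and quantifier rank at most `r`. -/
noncomputable def distPR (c p r : ℕ) (M N : Type*) [MeasurableSpace M] [MeasurableSpace N]
    [(mapLang c).Structure M] [(mapLang c).Structure N]
    (νM : Measure M) (νN : Measure N) : ℝ :=
  ⨆ φ : {φ : (mapLang c).Formula (Fin p) // qrank φ ≤ r},
    |modPairing c p M νM φ.1 - modPairing c p N νN φ.1|

/-- `ldist_p^r(M,N)`: the supremum of `|⟨φ,M⟩ - ⟨φ,N⟩|` over local formulas `φ` with `p` free
variables and local rank at most `r`. -/
noncomputable def ldistPR (c p r : ℕ) (M N : Type*) [MeasurableSpace M] [MeasurableSpace N]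
    [(mapLang c).Structure M] [(mapLang c).Structure N]
    (νM : Measure M) (νN : Measure N) : ℝ :=
  ⨆ φ : {φ : (mapLang c).Formula (Fin p) // IsRLocal c p r φ},
    |modPairing c p M νM φ.1 - modPairing c p N νN φ.1|

/-- The Stone pairing of the formula `dist(x₁,x₂) ≤ r` with a modeling. -/
noncomputable def deltaPairing (c r : ℕ) (M : Type*) [MeasurableSpace M]
    [(mapLang c).Structure M] (ν : Measure M) : ℝ :=
  ((Measure.pi fun _ : Fin 2 => ν)
    {v : Fin 2 → M | ballMem (fmap c M) r (v 0) (v 1)}).toReal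

end MapApprox

namespace MapApprox

open FirstOrder Language Filter Topology Set
open MeasureTheory (Measure IsProbabilityMeasure)
open scoped ENNReal

/-! ### Local types -/

/-- A set of formulas in one free variable, thought of as a candidate local type. -/
abbrev TypeSet (c : ℕ) := Set ((mapLang c).Formula (Fin 1))

/-- The rank-`r` local type of an element: the set of `r`-local formulas it satisfies. -/
def localTypeOf (c r : ℕ) (M : Type*) [(mapLang c).Structure M] (x : M) : TypeSet c :=
  {φ | IsRLocal c 1 r φ ∧ φ.Realize (fun _ => x)}

/-- A set of formulas is a rank-`r` local type if it is realized in some mapping. -/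
def IsLocalType (c r : ℕ) (T : TypeSet c) : Prop :=
  ∃ (M : Type) (_ : (mapLang c).Structure M) (x : M), T = localTypeOf c r M x

/-- The projection of a local type to its rank-`r` part. -/
def projType (c r : ℕ) (T : TypeSet c) : TypeSet c :=
  {φ | φ ∈ T ∧ IsRLocal c 1 r φ}

/-- `admPlus c R r τ t = 1` iff the rank-`R` local type `τ` of an element forces its image to
have rank-`r` local type `t`, and `0` otherwise. -/
noncomputable def admPlus (c R r : ℕ) (τ t : TypeSet c) : ℕ :=
  letI := Classical.propDecidable
  if (∀ (M : Type) [(mapLang c).Structure M] (x : M),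
      localTypeOf c R M x = τ → localTypeOf c r M (fmap c M x) = t) then 1 else 0

/-- `admMinus c R r τ t` : the largest `a ≤ r+1` such that the rank-`R` local type `τ` of an
element forces it to have at least `a` preimages of rank-`r` local type `t`. -/
noncomputable def admMinus (c R r : ℕ) (τ t : TypeSet c) : ℕ :=
  sSup {a : ℕ | a ≤ r + 1 ∧ ∀ (M : Type) [(mapLang c).Structure M] (x : M),
    localTypeOf c R M x = τ →
      (a : ℕ∞) ≤ ({u : M | fmap c M u = x ∧ localTypeOf c r M u = t}).encard}

/-- The `(R,r)`-restricted finitary mass transport principle for a (finitely supported)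
probability distribution `ρ` on rank-`R` local types. -/
def RestrictedFMTP (c R r : ℕ) (ρ : TypeSet c → ℝ) : Prop :=
  ∃ s : TypeSet c → TypeSet c → ℝ,
    (∀ τ t, 0 < ρ τ → (∃ τ', 0 < ρ τ' ∧ projType c r τ' = t) →
      (((∃ k : ℕ, k ≤ r ∧ s τ t = (k : ℝ)) ∨ (r : ℝ) < s τ t) ∧
        min (r : ℝ) (admMinus c R r τ t : ℝ) = min (r : ℝ) (s τ t))) ∧
    ∀ t₁ t₂ : TypeSet c,
      (∃ τ, 0 < ρ τ ∧ projType c r τ = t₁) → (∃ τ, 0 < ρ τ ∧ projType c r τ = t₂) →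
      (∑ᶠ τ₁ ∈ {τ | 0 < ρ τ ∧ projType c r τ = t₁}, (admPlus c R r τ₁ t₂ : ℝ) * ρ τ₁) =
      (∑ᶠ τ₂ ∈ {τ | 0 < ρ τ ∧ projType c r τ = t₂}, s τ₂ t₁ * ρ τ₂)

/-! ### Atomic formulas -/

/-- The formula `f^ℓ(x) = x`. -/
def iterEqFormula (c : ℕ) (ℓ : ℕ) : (mapLang c).Formula (Fin 1) :=
  Term.equal ((fun t => Functions.apply₁ (fsym c) t)^[ℓ] (Term.var (0 : Fin 1)))
    (Term.var (0 : Fin 1))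

/-- The atomic formula `M_k(x)`. -/
def relFormula (c : ℕ) (k : Fin c) : (mapLang c).Formula (Fin 1) :=
  Relations.formula₁ (rsym c k) (Term.var (0 : Fin 1))

/-! ### Restrictions, marking, and miscellaneous definitions -/

/-- The subset of a structure defined by a formula with one free variable. -/
def defSet (c : ℕ) (M : Type*) [(mapLang c).Structure M] (φ : (mapLang c).Formula (Fin 1)) :
    Set M := {x | φ.Realize (fun _ => x)}

/-- The function of the restriction of a mapping to a subset `X`. -/
noncomputable def restrictFun (c : ℕ) (M : Type*) [(mapLang c).Structure M] (X : Set M) :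
    X → X := fun v =>
  letI := Classical.propDecidable
  if h : fmap c M v.1 ∈ X then ⟨fmap c M v.1, h⟩ else v

/-- The normalized restriction of a measure to a subset. -/
noncomputable def restrictMeasure {M : Type*} [MeasurableSpace M] (ν : Measure M) (X : Set M) :
    Measure X := (ν X)⁻¹ • MeasureTheory.Measure.comap Subtype.val ν

/-- Marking one element `m` with a new unary relation: the resulting structure for the
signature with one extra unary relation. -/
def extStructure (c : ℕ) (M : Type*) [(mapLang c).Structure M] (m : M) :
    (mapLang (c + 1)).Structure M where
  funMap {n} f v :=
    match n, f, v with
    | 1, _, v => fmap c M (v 0)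
  RelMap {n} k v :=
    match n, k, v with
    | 1, k, v =>
        letI := Classical.propDecidable
        let k' : Fin (c + 1) := k
        if h : (k' : ℕ) < c then relP c ⟨(k' : ℕ), h⟩ (v 0) else v 0 = m

/-- A mapping is connected when any two elements are joined in the Gaifman graph. -/
def ConnectedMap {M : Type*} (f : M → M) : Prop :=
  ∀ u v : M, ∃ a b : ℕ, f^[a] u = f^[b] v

/-- The set of vertices lying on an undirected path of length at least `d+1` with endpoint
`rt` in the digraph `E`. -/
def pathSet {M : Type*} (E : M → M → Prop) (rt : M) (d : ℕ) : Set M :=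
  {x | ∃ (n : ℕ) (w : ℕ → M), d + 1 ≤ n ∧ w 0 = rt ∧
    (∀ i ≤ n, ∀ j ≤ n, w i = w j → i = j) ∧
    (∀ i < n, E (w i) (w (i + 1)) ∨ E (w (i + 1)) (w i)) ∧
    ∃ i ≤ n, w i = x}

/-- `E(u)`: the set of iterated preimages of `u`. -/
def iterPreimages {L : Type*} (f : L → L) (u : L) : Set L :=
  ⋃ k ∈ {k : ℕ | 1 ≤ k}, (f^[k]) ⁻¹' {u}

end MapApprox

namespace MapApprox

open FirstOrder Language Filter Topology Set
open MeasureTheory (Measure IsProbabilityMeasure)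
open scoped ENNReal

private lemma span_ker_aux {ι : Type*} [Fintype ι] [DecidableEq ι] (L : List (ι → ℚ)) :
    ∀ (x : ι → ℝ), (∀ a ∈ L, ∑ i, (a i : ℝ) * x i = 0) →
    x ∈ Submodule.span ℝ ((fun y : ι → ℚ => fun i => ((y i : ℝ))) ''
        {y : ι → ℚ | ∀ a ∈ L, ∑ i, a i * y i = 0}) := by
  induction L with
  | nil =>
      intro x _
      have hx : x = ∑ i, x i • (fun j => (((Pi.single i (1:ℚ) : ι → ℚ) j : ℚ) : ℝ)) := by
        funext j
        rw [Finset.sum_apply]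
        have h1 : ∀ i : ι, (x i • fun j => (((Pi.single i (1:ℚ) : ι → ℚ) j : ℚ) : ℝ)) j
            = if j = i then x i else 0 := by
          intro i
          simp only [Pi.smul_apply, smul_eq_mul, Pi.single_apply]
          split_ifs <;> simp
        rw [Finset.sum_congr rfl fun i _ => h1 i]
        simp
      rw [hx]
      refine Submodule.sum_mem _ fun i _ => Submodule.smul_mem _ _ ?_
      exact Submodule.subset_span ⟨(Pi.single i (1:ℚ) : ι → ℚ), by simp, rfl⟩
  | cons a L ih =>
      intro x hx
      have hxa : ∑ i, (a i : ℝ) * x i = 0 := hx a List.mem_cons_self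
      have hxL : ∀ b ∈ L, ∑ i, (b i : ℝ) * x i = 0 :=
        fun b hb => hx b (List.mem_cons_of_mem _ hb)
      by_cases hz : ∀ y : ι → ℚ, (∀ b ∈ L, ∑ i, b i * y i = 0) → ∑ i, a i * y i = 0
      · have hset : {y : ι → ℚ | ∀ b ∈ a :: L, ∑ i, b i * y i = 0}
            = {y : ι → ℚ | ∀ b ∈ L, ∑ i, b i * y i = 0} := by
          ext y
          simp only [Set.mem_setOf_eq, List.mem_cons]
          constructor
          · intro h b hb; exact h b (Or.inr hb)
          · intro h b hb
            rcases hb with rfl | hb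
            · exact hz y h
            · exact h b hb
        rw [hset]
        exact ih x hxL
      · push_neg at hz
        obtain ⟨u, huL, hua⟩ := hz
        set cQ : ℚ := ∑ i, a i * u i with hcQ
        set u' : ι → ℚ := cQ⁻¹ • u with hu'
        have hu'L : ∀ b ∈ L, ∑ i, b i * u' i = 0 := by
          intro b hb
          have : ∀ i, b i * u' i = cQ⁻¹ * (b i * u i) := by
            intro i; simp only [hu', Pi.smul_apply, smul_eq_mul]; ring
          rw [Finset.sum_congr rfl fun i _ => this i, ← Finset.mul_sum, huL b hb, mul_zero]
        have hu'a : ∑ i, a i * u' i = 1 := by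
          have : ∀ i, a i * u' i = cQ⁻¹ * (a i * u i) := by
            intro i; simp only [hu', Pi.smul_apply, smul_eq_mul]; ring
          rw [Finset.sum_congr rfl fun i _ => this i, ← Finset.mul_sum, ← hcQ,
            inv_mul_cancel₀ hua]
        let ℓ : (ι → ℝ) →ₗ[ℝ] ℝ :=
          { toFun := fun z => ∑ i, (a i : ℝ) * z i
            map_add' := fun z w => by
              simp [mul_add, Finset.sum_add_distrib]
            map_smul' := fun c z => by
              simp only [Pi.smul_apply, smul_eq_mul, RingHom.id_apply, Finset.mul_sum]
              exact Finset.sum_congr rfl fun i _ => by ring }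
        set v : ι → ℝ := fun i => ((u' i : ℝ)) with hv
        set π : (ι → ℝ) →ₗ[ℝ] (ι → ℝ) := LinearMap.id - LinearMap.smulRight ℓ v with hπ
        have hℓcast : ∀ y : ι → ℚ, ℓ (fun i => ((y i : ℝ))) = ((∑ i, a i * y i : ℚ) : ℝ) := by
          intro y
          simp only [ℓ, LinearMap.coe_mk, AddHom.coe_mk]
          push_cast
          rfl
        have key : ∀ y : ι → ℚ, (∀ b ∈ L, ∑ i, b i * y i = 0) →
            π (fun i => ((y i : ℝ))) ∈ ((fun y : ι → ℚ => fun i => ((y i : ℝ))) ''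
              {y : ι → ℚ | ∀ b ∈ a :: L, ∑ i, b i * y i = 0}) := by
          intro y hy
          refine ⟨y - (∑ i, a i * y i) • u', ?_, ?_⟩
          · intro b hb
            rcases List.mem_cons.mp hb with rfl | hb
            · have : ∀ i, b i * (y - (∑ j, b j * y j) • u') i
                  = b i * y i - (∑ j, b j * y j) * (b i * u' i) := by
                intro i; simp only [Pi.sub_apply, Pi.smul_apply, smul_eq_mul]; ring
              rw [Finset.sum_congr rfl fun i _ => this i, Finset.sum_sub_distrib,
                ← Finset.mul_sum, hu'a, mul_one, sub_self]
            · have : ∀ i, b i * (y - (∑ j, a j * y j) • u') i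
                  = b i * y i - (∑ j, a j * y j) * (b i * u' i) := by
                intro i; simp only [Pi.sub_apply, Pi.smul_apply, smul_eq_mul]; ring
              rw [Finset.sum_congr rfl fun i _ => this i, Finset.sum_sub_distrib,
                ← Finset.mul_sum, hu'L b hb, mul_zero, hy b hb, sub_zero]
          · funext j
            simp only [hπ, LinearMap.sub_apply, LinearMap.id_apply, LinearMap.smulRight_apply,
              Pi.sub_apply, Pi.smul_apply, smul_eq_mul, hℓcast y, hv]
            push_cast
            ring
        have hx_span := ih x hxL
        have hmap : π x ∈ Submodule.span ℝ ((fun y : ι → ℚ => fun i => ((y i : ℝ))) ''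
            {y : ι → ℚ | ∀ b ∈ a :: L, ∑ i, b i * y i = 0}) := by
          have h1 : π x ∈ Submodule.map π (Submodule.span ℝ
              ((fun y : ι → ℚ => fun i => ((y i : ℝ))) ''
                {y : ι → ℚ | ∀ b ∈ L, ∑ i, b i * y i = 0})) :=
            Submodule.mem_map_of_mem hx_span
          rw [Submodule.map_span] at h1
          refine Submodule.span_le.mpr ?_ h1
          rintro z ⟨w, ⟨y, hy, rfl⟩, rfl⟩
          exact Submodule.subset_span (key y hy)
        have hπx : π x = x := by
          have : ℓ x = 0 := hxa
          simp [hπ, this]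
        rwa [hπx] at hmap


private lemma rat_approx_affine {ι : Type*} [Fintype ι] [DecidableEq ι]
    (L : List ((ι → ℚ) × ℚ)) (x : ι → ℝ)
    (hx : ∀ p ∈ L, ∑ i, ((p.1 i : ℝ)) * x i = (p.2 : ℝ)) {δ : ℝ} (hδ : 0 < δ) :
    ∃ y : ι → ℚ, (∀ p ∈ L, ∑ i, p.1 i * y i = p.2) ∧ ∀ i, |x i - (y i : ℝ)| < δ := by
  classical
  set L' : List (Option ι → ℚ) := L.map (fun p => fun o => o.elim (-p.2) p.1) with hL'
  set x' : Option ι → ℝ := fun o => o.elim 1 x with hx'def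
  have hx' : ∀ a ∈ L', ∑ o, (a o : ℝ) * x' o = 0 := by
    intro a ha
    rw [hL', List.mem_map] at ha
    obtain ⟨p, hp, rfl⟩ := ha
    rw [Fintype.sum_option]
    simp only [Option.elim_none, Option.elim_some, hx'def]
    push_cast
    rw [hx p hp]
    ring
  have hmem := span_ker_aux L' x' hx'
  rw [Submodule.mem_span_set'] at hmem
  obtain ⟨n, cc, g, hrep⟩ := hmem
  choose w hw1 hw2 using fun j : Fin n => (g j).2
  -- bounds
  set B : ℝ := 1 + ∑ j : Fin n, ∑ o : Option ι, |((w j o : ℝ))| with hB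
  have hB1 : 1 ≤ B := by
    rw [hB]
    have : (0:ℝ) ≤ ∑ j : Fin n, ∑ o : Option ι, |((w j o : ℝ))| :=
      Finset.sum_nonneg fun j _ => Finset.sum_nonneg fun o _ => abs_nonneg _
    linarith
  have hBpos : 0 < B := by linarith
  set X : ℝ := 1 + ∑ i : ι, |x i| with hX
  have hX1 : 1 ≤ X := by
    have : (0:ℝ) ≤ ∑ i : ι, |x i| := Finset.sum_nonneg fun i _ => abs_nonneg _
    rw [hX]; linarith
  have hxX : ∀ i : ι, |x i| ≤ X := by
    intro i
    have := Finset.single_le_sum (f := fun i : ι => |x i|)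
      (fun i _ => abs_nonneg _) (Finset.mem_univ i)
    rw [hX]; linarith
  set δ'' : ℝ := min (1/2) (δ/(4*(X+1))) with hδ''
  have hδ''pos : 0 < δ'' := by
    rw [hδ'']
    refine lt_min (by norm_num) ?_
    apply div_pos hδ
    linarith
  have hδ''half : δ'' ≤ 1/2 := min_le_left _ _
  have hδ''δ : δ'' ≤ δ/(4*(X+1)) := min_le_right _ _
  set η : ℝ := δ''/B with hη
  have hηpos : 0 < η := div_pos hδ''pos hBpos
  choose q hq1 hq2 using fun j : Fin n =>
    exists_rat_btwn (show cc j - η < cc j + η by linarith)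
  have hqclose : ∀ j, |cc j - (q j : ℝ)| < η := by
    intro j
    refine abs_sub_lt_iff.mpr ⟨by linarith [hq1 j], by linarith [hq2 j]⟩
  set y' : Option ι → ℚ := fun o => ∑ j : Fin n, q j * w j o with hy'
  have hy'K : ∀ a ∈ L', ∑ o, a o * y' o = 0 := by
    intro a ha
    have h1 : ∀ o : Option ι, a o * y' o = ∑ j : Fin n, q j * (a o * w j o) := by
      intro o
      rw [hy', Finset.mul_sum]
      exact Finset.sum_congr rfl fun j _ => by ring
    rw [Finset.sum_congr rfl fun o _ => h1 o, Finset.sum_comm]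
    refine Finset.sum_eq_zero fun j _ => ?_
    rw [← Finset.mul_sum, hw1 j a ha, mul_zero]
  -- closeness of y' to x'
  have hx'rep : ∀ o : Option ι, x' o = ∑ j : Fin n, cc j * ((w j o : ℝ)) := by
    intro o
    have := congrFun hrep o
    rw [Finset.sum_apply] at this
    rw [← this]
    refine (Finset.sum_congr rfl fun j _ => ?_)
    have h5 := congrFun (hw2 j) o
    simp only [Pi.smul_apply, smul_eq_mul]
    rw [← h5]
  have hclose' : ∀ o : Option ι, |x' o - ((y' o : ℝ))| < δ'' := by
    intro o
    have hcast : ((y' o : ℝ)) = ∑ j : Fin n, (q j : ℝ) * ((w j o : ℝ)) := by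
      rw [hy']; push_cast; rfl
    rw [hx'rep o, hcast, ← Finset.sum_sub_distrib]
    have h2 : ∀ j : Fin n, cc j * ((w j o : ℝ)) - (q j : ℝ) * ((w j o : ℝ))
        = (cc j - (q j : ℝ)) * ((w j o : ℝ)) := fun j => by ring
    rw [Finset.sum_congr rfl fun j _ => h2 j]
    calc |∑ j : Fin n, (cc j - (q j : ℝ)) * ((w j o : ℝ))|
        ≤ ∑ j : Fin n, |(cc j - (q j : ℝ))| * |((w j o : ℝ))| := by
          refine (Finset.abs_sum_le_sum_abs _ _).trans ?_
          exact le_of_eq (Finset.sum_congr rfl fun j _ => abs_mul _ _)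
      _ ≤ ∑ j : Fin n, η * |((w j o : ℝ))| := by
          refine Finset.sum_le_sum fun j _ => ?_
          exact mul_le_mul_of_nonneg_right (le_of_lt (hqclose j)) (abs_nonneg _)
      _ = η * ∑ j : Fin n, |((w j o : ℝ))| := by rw [Finset.mul_sum]
      _ ≤ η * (B - 1) := by
          refine mul_le_mul_of_nonneg_left ?_ (le_of_lt hηpos)
          have : ∀ j : Fin n, |((w j o : ℝ))| ≤ ∑ o' : Option ι, |((w j o' : ℝ))| :=
            fun j => Finset.single_le_sum (f := fun o' => |((w j o' : ℝ))|)
              (fun _ _ => abs_nonneg _) (Finset.mem_univ o)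
          have := Finset.sum_le_sum (fun j (_ : j ∈ Finset.univ) => this j)
          rw [hB]; linarith
      _ < η * B := by nlinarith
      _ = δ'' := by rw [hη]; field_simp
  -- the denominator
  set t : ℚ := y' none with ht
  have hx'none : x' none = 1 := rfl
  have htclose : |1 - ((t : ℝ))| < δ'' := by
    have := hclose' none
    rwa [hx'none] at this
  have htpos : (1:ℝ)/2 ≤ ((t:ℝ)) := by
    rw [abs_sub_lt_iff] at htclose
    linarith [htclose.1, htclose.2]
  have htne : t ≠ 0 := by
    intro h
    rw [h] at htpos
    norm_num at htpos
  refine ⟨fun i => y' (some i) / t, ?_, ?_⟩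
  · intro p hp
    have ha : (fun o => Option.elim o (-p.2) p.1) ∈ L' := by
      rw [hL', List.mem_map]
      exact ⟨p, hp, rfl⟩
    have := hy'K _ ha
    rw [Fintype.sum_option] at this
    simp only [Option.elim_none, Option.elim_some] at this
    have hsum : ∑ i : ι, p.1 i * y' (some i) = p.2 * t := by
      rw [← ht] at this
      linarith [this]
    have : ∑ i : ι, p.1 i * (y' (some i) / t) = (∑ i : ι, p.1 i * y' (some i)) / t := by
      rw [Finset.sum_div]
      exact Finset.sum_congr rfl fun i _ => by ring
    rw [this, hsum, mul_div_assoc, div_self htne, mul_one]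
  · intro i
    have h1 : |x i - ((y' (some i) : ℝ))| < δ'' := hclose' (some i)
    have h2 : ((((y' (some i) / t) : ℚ) : ℝ)) = ((y' (some i) : ℝ)) / ((t:ℝ)) := by
      push_cast; ring
    rw [h2]
    have hT : (0:ℝ) < ((t:ℝ)) := by linarith
    have key : x i - ((y' (some i) : ℝ)) / ((t:ℝ))
        = (x i * ((t:ℝ)) - ((y' (some i) : ℝ))) / ((t:ℝ)) := by
      field_simp
    rw [key, abs_div, abs_of_pos hT]
    have hnum : |x i * ((t:ℝ)) - ((y' (some i) : ℝ))| < (X + 1) * δ'' := by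
      have : x i * ((t:ℝ)) - ((y' (some i) : ℝ))
          = x i * (((t:ℝ)) - 1) + (x i - ((y' (some i) : ℝ))) := by ring
      rw [this]
      calc |x i * (((t:ℝ)) - 1) + (x i - ((y' (some i) : ℝ)))|
          ≤ |x i| * |((t:ℝ)) - 1| + |x i - ((y' (some i) : ℝ))| := by
            refine (abs_add_le _ _).trans ?_
            rw [abs_mul]
        _ < X * δ'' + δ'' := by
            have h3 : |((t:ℝ)) - 1| < δ'' := by rwa [abs_sub_comm] at htclose
            have h4 : |x i| * |((t:ℝ)) - 1| ≤ X * |((t:ℝ)) - 1| :=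
              mul_le_mul_of_nonneg_right (hxX i) (abs_nonneg _)
            nlinarith [abs_nonneg (x i), hxX i]
        _ = (X + 1) * δ'' := by ring
    rw [div_lt_iff₀ hT]
    have hfact : (X + 1) * δ'' ≤ (X + 1) * (δ/(4*(X+1))) :=
      mul_le_mul_of_nonneg_left hδ''δ (by linarith)
    have hfact2 : (X + 1) * (δ/(4*(X+1))) = δ/4 := by
      field_simp
    nlinarith [htpos, hδ]


/-- A probability measure on rank-`R` local types satisfying the
`(R,r)`-restricted FMTP can be approximated in total variation, within any `ε > 0`, by a
rational-valued probability measure with the same support that still satisfies the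
`(R,r)`-restricted FMTP. -/
theorem rational_approximation_of_restricted_fmtp (c r R : ℕ) (hr : 0 < r) (hR : 2 * r < R)
    (μ : TypeSet c → ℝ)
    (hsupp : ∀ τ, μ τ ≠ 0 → IsLocalType c R τ)
    (hnonneg : ∀ τ, 0 ≤ μ τ)
    (hfin : (Function.support μ).Finite)
    (hsum : ∑ᶠ τ, μ τ = 1)
    (hfmtp : RestrictedFMTP c R r μ)
    (ε : ℝ) (hε : 0 < ε) :
    ∃ ν : TypeSet c → ℝ,
      (∀ τ, ∃ q : ℚ, ν τ = (q : ℝ)) ∧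
      (∀ τ, 0 ≤ ν τ) ∧
      Function.support ν = Function.support μ ∧
      (∑ᶠ τ, ν τ = 1) ∧
      RestrictedFMTP c R r ν ∧
      (∑ᶠ τ, |μ τ - ν τ|) / 2 < ε := by
  classical
  obtain ⟨s₀, hs₀1, hs₀2⟩ := hfmtp
  set S : Finset (TypeSet c) := hfin.toFinset with hSdef
  have hposS : ∀ τ, 0 < μ τ ↔ τ ∈ S := by
    intro τ
    rw [hSdef, Set.Finite.mem_toFinset, Function.mem_support]
    exact ⟨ne_of_gt, fun h => (hnonneg τ).lt_of_ne (Ne.symm h)⟩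
  set Tr : Finset (TypeSet c) := S.image (projType c r) with hTrdef
  have hwit : ∀ t ∈ Tr, ∃ τ', 0 < μ τ' ∧ projType c r τ' = t := by
    intro t ht
    rw [hTrdef, Finset.mem_image] at ht
    obtain ⟨τ, hτ, h⟩ := ht
    exact ⟨τ, (hposS τ).2 hτ, h⟩
  have hfinsum : ∀ (ρ : TypeSet c → ℝ), (∀ τ, 0 < ρ τ ↔ τ ∈ S) →
      ∀ (t : TypeSet c) (g : TypeSet c → ℝ),
      (∑ᶠ τ ∈ {τ : TypeSet c | 0 < ρ τ ∧ projType c r τ = t}, g τ)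
        = ∑ τ ∈ S.filter (fun τ => projType c r τ = t), g τ := by
    intro ρ hρ t g
    have hset : {τ : TypeSet c | 0 < ρ τ ∧ projType c r τ = t}
        = ↑(S.filter fun τ => projType c r τ = t) := by
      ext τ
      simp only [Set.mem_setOf_eq, Finset.coe_filter, hρ τ]
    rw [hset, finsum_mem_coe_finset]
  have hsplit : ∀ (t₁ t₂ : TypeSet c) (g : TypeSet c → ℝ),
      ∑ τ ∈ S.filter (fun τ => projType c r τ = t₂), g τ
        = (∑ τ ∈ S.filter (fun τ => projType c r τ = t₂ ∧ admMinus c R r τ t₁ < r), g τ)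
          + ∑ τ ∈ S.filter (fun τ => projType c r τ = t₂ ∧ ¬ admMinus c R r τ t₁ < r), g τ := by
    intro t₁ t₂ g
    rw [← Finset.sum_filter_add_sum_filter_not (S.filter fun τ => projType c r τ = t₂)
        (fun τ => admMinus c R r τ t₁ < r) g, Finset.filter_filter, Finset.filter_filter]
  have hs0fix : ∀ τ ∈ S, ∀ t ∈ Tr, admMinus c R r τ t < r →
      s₀ τ t = (admMinus c R r τ t : ℝ) := by
    intro τ hτ t ht hlt
    obtain ⟨hform, hmin⟩ := hs₀1 τ t ((hposS τ).2 hτ) (hwit t ht)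
    have hcast : (admMinus c R r τ t : ℝ) < (r : ℝ) := by exact_mod_cast hlt
    rw [min_eq_right (le_of_lt hcast)] at hmin
    rcases hform with ⟨k, hk, hke⟩ | hgt
    · rw [hke] at hmin ⊢
      have hkr : (k : ℝ) ≤ (r : ℝ) := by exact_mod_cast hk
      rw [min_eq_right hkr] at hmin
      exact hmin.symm
    · rw [min_eq_left (le_of_lt hgt)] at hmin
      exact absurd hmin (ne_of_lt hcast)
  have hs0free : ∀ τ ∈ S, ∀ t ∈ Tr, ¬ admMinus c R r τ t < r → (r : ℝ) ≤ s₀ τ t := by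
    intro τ hτ t ht hge
    obtain ⟨hform, hmin⟩ := hs₀1 τ t ((hposS τ).2 hτ) (hwit t ht)
    have hcast : (r : ℝ) ≤ (admMinus c R r τ t : ℝ) := by exact_mod_cast not_lt.mp hge
    rw [min_eq_left hcast] at hmin
    have := min_le_right (r : ℝ) (s₀ τ t)
    linarith
  set Mf : TypeSet c × TypeSet c → (TypeSet c → ℝ) → ℝ := fun p ρ =>
    ∑ τ ∈ S.filter (fun τ => projType c r τ = p.2 ∧ ¬ admMinus c R r τ p.1 < r), ρ τ with hMf
  set Efun : TypeSet c × TypeSet c → (TypeSet c → ℝ) → ℝ := fun p ρ =>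
    (∑ τ ∈ S.filter (fun τ => projType c r τ = p.1), (admPlus c R r τ p.2 : ℝ) * ρ τ)
    - (∑ τ ∈ S.filter (fun τ => projType c r τ = p.2 ∧ admMinus c R r τ p.1 < r),
        (admMinus c R r τ p.1 : ℝ) * ρ τ)
    - (r : ℝ) * Mf p ρ with hEfun
  have hEkey : ∀ p : TypeSet c × TypeSet c, p.1 ∈ Tr → p.2 ∈ Tr →
      Efun p μ = ∑ τ ∈ S.filter (fun τ => projType c r τ = p.2 ∧ ¬ admMinus c R r τ p.1 < r),
        (s₀ τ p.1 - r) * μ τ := by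
    intro p h1 h2
    have heq := hs₀2 p.1 p.2 (hwit _ h1) (hwit _ h2)
    rw [hfinsum μ hposS, hfinsum μ hposS] at heq
    rw [hsplit p.1 p.2 (fun τ => s₀ τ p.1 * μ τ)] at heq
    have hfixeq : ∑ τ ∈ S.filter (fun τ => projType c r τ = p.2 ∧ admMinus c R r τ p.1 < r),
        s₀ τ p.1 * μ τ
        = ∑ τ ∈ S.filter (fun τ => projType c r τ = p.2 ∧ admMinus c R r τ p.1 < r),
          (admMinus c R r τ p.1 : ℝ) * μ τ := by
      refine Finset.sum_congr rfl fun τ hτ => ?_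
      rw [Finset.mem_filter] at hτ
      rw [hs0fix τ hτ.1 p.1 h1 hτ.2.2]
    rw [hfixeq] at heq
    have hRHS : ∑ τ ∈ S.filter (fun τ => projType c r τ = p.2 ∧ ¬ admMinus c R r τ p.1 < r),
        (s₀ τ p.1 - r) * μ τ
        = (∑ τ ∈ S.filter (fun τ => projType c r τ = p.2 ∧ ¬ admMinus c R r τ p.1 < r),
            s₀ τ p.1 * μ τ)
          - ∑ τ ∈ S.filter (fun τ => projType c r τ = p.2 ∧ ¬ admMinus c R r τ p.1 < r),
            (r : ℝ) * μ τ := by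
      rw [← Finset.sum_sub_distrib]
      exact Finset.sum_congr rfl fun τ _ => by ring
    simp only [hEfun, hMf]
    rw [heq, hRHS, Finset.mul_sum]
    ring
  have hEnonneg : ∀ p : TypeSet c × TypeSet c, p.1 ∈ Tr → p.2 ∈ Tr → 0 ≤ Efun p μ := by
    intro p h1 h2
    rw [hEkey p h1 h2]
    refine Finset.sum_nonneg fun τ hτ => ?_
    rw [Finset.mem_filter] at hτ
    have h3 := hs0free τ hτ.1 p.1 h1 hτ.2.2
    exact mul_nonneg (by linarith) (hnonneg τ)
  have hfreeNonempty : ∀ p : TypeSet c × TypeSet c, p.1 ∈ Tr → p.2 ∈ Tr → Efun p μ ≠ 0 →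
      (S.filter (fun τ => projType c r τ = p.2 ∧ ¬ admMinus c R r τ p.1 < r)).Nonempty := by
    intro p h1 h2 hne
    rw [hEkey p h1 h2] at hne
    by_contra hempty
    rw [Finset.not_nonempty_iff_eq_empty] at hempty
    rw [hempty, Finset.sum_empty] at hne
    exact hne rfl
  set coefQ : TypeSet c × TypeSet c → TypeSet c → ℚ := fun p τ =>
    (if projType c r τ = p.1 then (admPlus c R r τ p.2 : ℚ) else 0)
    - (if projType c r τ = p.2 ∧ admMinus c R r τ p.1 < r then (admMinus c R r τ p.1 : ℚ) else 0)
    - (if projType c r τ = p.2 ∧ ¬ admMinus c R r τ p.1 < r then (r : ℚ) else 0) with hcoefQ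
  have hcoefE : ∀ (p : TypeSet c × TypeSet c) (ρ : TypeSet c → ℝ),
      ∑ τ ∈ S, (coefQ p τ : ℝ) * ρ τ = Efun p ρ := by
    intro p ρ
    have hpt : ∀ τ, ((coefQ p τ : ℝ)) * ρ τ
        = (if projType c r τ = p.1 then (admPlus c R r τ p.2 : ℝ) * ρ τ else 0)
          - (if projType c r τ = p.2 ∧ admMinus c R r τ p.1 < r
              then (admMinus c R r τ p.1 : ℝ) * ρ τ else 0)
          - (if projType c r τ = p.2 ∧ ¬ admMinus c R r τ p.1 < r then (r : ℝ) * ρ τ else 0) := by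
      intro τ
      simp only [hcoefQ]
      split_ifs <;> push_cast <;> ring
    rw [Finset.sum_congr rfl fun τ _ => hpt τ, Finset.sum_sub_distrib, Finset.sum_sub_distrib,
      ← Finset.sum_filter, ← Finset.sum_filter, ← Finset.sum_filter]
    simp only [hEfun, hMf, Finset.mul_sum]
  set P : Finset (TypeSet c × TypeSet c) := Tr ×ˢ Tr with hPdef
  set Pzero : Finset (TypeSet c × TypeSet c) := P.filter (fun p => Efun p μ = 0) with hPzero
  set Ppos : Finset (TypeSet c × TypeSet c) := P.filter (fun p => Efun p μ ≠ 0) with hPpos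
  set L : List (({τ // τ ∈ S} → ℚ) × ℚ) :=
    ((fun _ => 1, 1)) :: (Pzero.toList.map fun p => (fun i => coefQ p i.1, 0)) with hL
  have hsum_S : ∑ τ ∈ S, μ τ = 1 := by
    rw [← hsum]
    exact (finsum_eq_sum_of_support_subset μ (by rw [hSdef, Set.Finite.coe_toFinset])).symm
  have hxL : ∀ pb ∈ L, ∑ i : {τ // τ ∈ S}, ((pb.1 i : ℝ)) * μ i.1 = (pb.2 : ℝ) := by
    intro pb hpb
    rw [hL] at hpb
    rcases List.mem_cons.mp hpb with rfl | hpb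
    · simp only [Rat.cast_one, one_mul]
      rw [Finset.sum_coe_sort S (fun τ => μ τ)]
      exact hsum_S
    · rw [List.mem_map] at hpb
      obtain ⟨p, hp, rfl⟩ := hpb
      rw [Finset.mem_toList] at hp
      simp only [Rat.cast_zero]
      rw [Finset.sum_coe_sort S (fun τ => ((coefQ p τ : ℝ)) * μ τ), hcoefE p μ]
      rw [hPzero, Finset.mem_filter] at hp
      exact hp.2
  set Cp : TypeSet c × TypeSet c → ℝ := fun p => (∑ τ ∈ S, |((coefQ p τ : ℝ))|) + 1 with hCp
  have hCp_pos : ∀ p, 0 < Cp p := by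
    intro p
    have : (0:ℝ) ≤ ∑ τ ∈ S, |((coefQ p τ : ℝ))| :=
      Finset.sum_nonneg fun τ _ => abs_nonneg _
    simp only [hCp]
    linarith
  have hEposPpos : ∀ p ∈ Ppos, 0 < Efun p μ := by
    intro p hp
    rw [hPpos, Finset.mem_filter] at hp
    have hpP := hp.1
    rw [hPdef, Finset.mem_product] at hpP
    exact (hEnonneg p hpP.1 hpP.2).lt_of_ne (Ne.symm hp.2)
  set D : Finset ℝ :=
    insert (2*ε/(S.card+1)) ((S.image μ) ∪ (Ppos.image (fun p => Efun p μ / Cp p))) with hD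
  have hDne : D.Nonempty := ⟨_, Finset.mem_insert_self _ _⟩
  set δ : ℝ := D.min' hDne with hδdef
  have hDpos : ∀ d ∈ D, 0 < d := by
    intro d hd
    rw [hD, Finset.mem_insert, Finset.mem_union] at hd
    rcases hd with rfl | hd | hd
    · have h0 : (0:ℝ) ≤ (S.card : ℝ) := Nat.cast_nonneg _
      exact div_pos (by linarith) (by linarith)
    · obtain ⟨τ, hτ, rfl⟩ := Finset.mem_image.mp hd
      exact (hposS τ).2 hτ
    · obtain ⟨p, hp, rfl⟩ := Finset.mem_image.mp hd
      exact div_pos (hEposPpos p hp) (hCp_pos p)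
  have hδpos : 0 < δ := hDpos _ (D.min'_mem hDne)
  have hδle : ∀ d ∈ D, δ ≤ d := fun d hd => D.min'_le d hd
  obtain ⟨y, hyL, hyclose⟩ := rat_approx_affine L (fun i => μ i.1) hxL hδpos
  set ν : TypeSet c → ℝ := fun τ => if h : τ ∈ S then ((y ⟨τ, h⟩ : ℝ)) else 0 with hν
  have hνS : ∀ (τ : TypeSet c) (h : τ ∈ S), ν τ = ((y ⟨τ, h⟩ : ℝ)) := by
    intro τ h
    simp only [hν, dif_pos h]
  have hνoff : ∀ τ, τ ∉ S → ν τ = 0 := by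
    intro τ h
    simp only [hν, dif_neg h]
  have hνclose : ∀ (τ : TypeSet c), τ ∈ S → |μ τ - ν τ| < δ := by
    intro τ hτ
    rw [hνS τ hτ]
    exact hyclose ⟨τ, hτ⟩
  have hνpos : ∀ τ, 0 < ν τ ↔ τ ∈ S := by
    intro τ
    constructor
    · intro h
      by_contra hc
      rw [hνoff τ hc] at h
      exact lt_irrefl 0 h
    · intro hτ
      have h1 := hνclose τ hτ
      have h2 : δ ≤ μ τ := hδle _ (by
        rw [hD]
        exact Finset.mem_insert_of_mem (Finset.mem_union_left _ (Finset.mem_image_of_mem μ hτ)))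
      have h3 := (abs_sub_lt_iff.mp h1).1
      linarith
  have hνnonneg : ∀ τ, 0 ≤ ν τ := by
    intro τ
    by_cases h : τ ∈ S
    · exact le_of_lt ((hνpos τ).2 h)
    · rw [hνoff τ h]
  have hνsum_coe : ∀ (p : TypeSet c × TypeSet c), ∑ τ ∈ S, ((coefQ p τ : ℝ)) * ν τ
      = ∑ i : {τ // τ ∈ S}, ((coefQ p i.1 : ℝ)) * ((y i : ℝ)) := by
    intro p
    rw [← Finset.sum_coe_sort S (fun τ => ((coefQ p τ : ℝ)) * ν τ)]
    refine Finset.sum_congr rfl fun i _ => ?_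
    rw [hνS i.1 i.2]
  have hEν0 : ∀ p ∈ Pzero, Efun p ν = 0 := by
    intro p hp
    have hmem : ((fun i : {τ // τ ∈ S} => coefQ p i.1), (0:ℚ)) ∈ L := by
      rw [hL]
      exact List.mem_cons_of_mem _ (List.mem_map.mpr ⟨p, Finset.mem_toList.mpr hp, rfl⟩)
    have := hyL _ hmem
    have hcast : ∑ i : {τ // τ ∈ S}, ((coefQ p i.1 : ℝ)) * ((y i : ℝ)) = 0 := by
      have h2 := congrArg (fun q : ℚ => (q : ℝ)) this
      push_cast at h2
      convert h2 using 2
    rw [← hcoefE p ν, hνsum_coe p, hcast]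
  have hEνpos : ∀ p ∈ Ppos, 0 < Efun p ν := by
    intro p hp
    have hEμ : 0 < Efun p μ := hEposPpos p hp
    have hδE : δ ≤ Efun p μ / Cp p := hδle _ (by
      rw [hD]
      exact Finset.mem_insert_of_mem
        (Finset.mem_union_right _ (Finset.mem_image_of_mem _ hp)))
    have hdiff : Efun p ν - Efun p μ = ∑ τ ∈ S, ((coefQ p τ : ℝ)) * (ν τ - μ τ) := by
      rw [← hcoefE p ν, ← hcoefE p μ, ← Finset.sum_sub_distrib]
      exact Finset.sum_congr rfl fun τ _ => by ring
    have habs : |Efun p ν - Efun p μ| ≤ (Cp p - 1) * δ := by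
      rw [hdiff]
      calc |∑ τ ∈ S, ((coefQ p τ : ℝ)) * (ν τ - μ τ)|
          ≤ ∑ τ ∈ S, |((coefQ p τ : ℝ))| * |ν τ - μ τ| := by
            refine (Finset.abs_sum_le_sum_abs _ _).trans ?_
            exact le_of_eq (Finset.sum_congr rfl fun τ _ => abs_mul _ _)
        _ ≤ ∑ τ ∈ S, |((coefQ p τ : ℝ))| * δ := by
            refine Finset.sum_le_sum fun τ hτ => ?_
            refine mul_le_mul_of_nonneg_left ?_ (abs_nonneg _)
            rw [abs_sub_comm]
            exact le_of_lt (hνclose τ hτ)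
        _ = (Cp p - 1) * δ := by
            rw [← Finset.sum_mul]
            simp only [hCp]
            ring
    have hCδ : Cp p * δ ≤ Efun p μ := by
      calc Cp p * δ ≤ Cp p * (Efun p μ / Cp p) :=
            mul_le_mul_of_nonneg_left hδE (le_of_lt (hCp_pos p))
        _ = Efun p μ := by field_simp; exact div_self (hCp_pos p).ne'
    have h5 : |Efun p ν - Efun p μ| < Efun p μ := by
      have : (Cp p - 1) * δ < Cp p * δ := by nlinarith [hδpos]
      linarith
    have h6 := (abs_lt.mp h5).1
    linarith
  have hMfν_pos : ∀ p ∈ Ppos, 0 < Mf p ν := by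
    intro p hp
    have hp2 := hp
    rw [hPpos, Finset.mem_filter] at hp2
    have hpP := hp2.1
    rw [hPdef, Finset.mem_product] at hpP
    obtain ⟨τ₀, hτ₀⟩ := hfreeNonempty p hpP.1 hpP.2 hp2.2
    simp only [hMf]
    refine Finset.sum_pos ?_ ⟨τ₀, hτ₀⟩
    intro τ hτ
    rw [Finset.mem_filter] at hτ
    exact (hνpos τ).2 hτ.1
  -- now assemble
  refine ⟨ν, ?_, hνnonneg, ?_, ?_, ?_, ?_⟩
  · intro τ
    by_cases h : τ ∈ S
    · exact ⟨y ⟨τ, h⟩, hνS τ h⟩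
    · exact ⟨0, by rw [hνoff τ h]; norm_num⟩
  · ext τ
    simp only [Function.mem_support]
    constructor
    · intro h
      have : τ ∈ S := by
        by_contra hc
        exact h (hνoff τ hc)
      exact ne_of_gt ((hposS τ).2 this)
    · intro h
      have : τ ∈ S := (hposS τ).1 ((hnonneg τ).lt_of_ne (Ne.symm h))
      exact ne_of_gt ((hνpos τ).2 this)
  · have hsupp : Function.support ν ⊆ ↑S := by
      intro τ h
      rw [Function.mem_support] at h
      by_contra hc
      exact h (hνoff τ hc)
    rw [finsum_eq_sum_of_support_subset ν hsupp]
    have hhead : ((fun _ : {τ // τ ∈ S} => (1:ℚ)), (1:ℚ)) ∈ L := by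
      rw [hL]; exact List.mem_cons_self
    have := hyL _ hhead
    simp only [one_mul] at this
    have hcast : ∑ i : {τ // τ ∈ S}, ((y i : ℝ)) = 1 := by
      have h2 := congrArg (fun q : ℚ => (q : ℝ)) this
      push_cast at h2
      convert h2 using 2
    rw [← Finset.sum_coe_sort S ν]
    rw [← hcast]
    exact Finset.sum_congr rfl fun i _ => hνS i.1 i.2
  · -- RestrictedFMTP for ν
    refine ⟨fun τ t =>
      if admMinus c R r τ t < r then ((admMinus c R r τ t : ℝ))
      else (r : ℝ) + (if (t, projType c r τ) ∈ Ppos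
        then Efun (t, projType c r τ) ν / Mf (t, projType c r τ) ν else 0), ?_, ?_⟩
    · intro τ t hτν hwitν
      beta_reduce
      have hτS : τ ∈ S := (hνpos τ).1 hτν
      have htTr : t ∈ Tr := by
        obtain ⟨τ', hτ', hproj⟩ := hwitν
        rw [hTrdef, ← hproj]
        exact Finset.mem_image_of_mem _ ((hνpos τ').1 hτ')
      have hprTr : projType c r τ ∈ Tr := by
        rw [hTrdef]
        exact Finset.mem_image_of_mem _ hτS
      by_cases hlt : admMinus c R r τ t < r
      · rw [if_pos hlt]
        constructor
        · exact Or.inl ⟨admMinus c R r τ t, le_of_lt hlt, rfl⟩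
        · rfl
      · rw [if_neg hlt]
        have hcast : (r : ℝ) ≤ ((admMinus c R r τ t : ℝ)) := by exact_mod_cast not_lt.mp hlt
        by_cases hpp : (t, projType c r τ) ∈ Ppos
        · rw [if_pos hpp]
          have hq : 0 < Efun (t, projType c r τ) ν / Mf (t, projType c r τ) ν :=
            div_pos (hEνpos _ hpp) (hMfν_pos _ hpp)
          constructor
          · exact Or.inr (by linarith)
          · rw [min_eq_left hcast, min_eq_left (by linarith)]
        · rw [if_neg hpp, add_zero]
          constructor
          · exact Or.inl ⟨r, le_rfl, rfl⟩
          · rw [min_eq_left hcast, min_self]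
    · intro t₁ t₂ hw1 hw2
      beta_reduce
      have ht₁ : t₁ ∈ Tr := by
        obtain ⟨τ', hτ', hproj⟩ := hw1
        rw [hTrdef, ← hproj]
        exact Finset.mem_image_of_mem _ ((hνpos τ').1 hτ')
      have ht₂ : t₂ ∈ Tr := by
        obtain ⟨τ', hτ', hproj⟩ := hw2
        rw [hTrdef, ← hproj]
        exact Finset.mem_image_of_mem _ ((hνpos τ').1 hτ')
      have hpP : (t₁, t₂) ∈ P := by
        rw [hPdef, Finset.mem_product]
        exact ⟨ht₁, ht₂⟩
      rw [hfinsum ν hνpos, hfinsum ν hνpos]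
      rw [hsplit t₁ t₂]
      have hfix2 : ∑ τ ∈ S.filter (fun τ => projType c r τ = t₂ ∧ admMinus c R r τ t₁ < r),
          (if admMinus c R r τ t₁ < r then ((admMinus c R r τ t₁ : ℝ))
            else (r : ℝ) + (if (t₁, projType c r τ) ∈ Ppos
              then Efun (t₁, projType c r τ) ν / Mf (t₁, projType c r τ) ν else 0)) * ν τ
          = ∑ τ ∈ S.filter (fun τ => projType c r τ = t₂ ∧ admMinus c R r τ t₁ < r),
            ((admMinus c R r τ t₁ : ℝ)) * ν τ := by
        refine Finset.sum_congr rfl fun τ hτ => ?_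
        rw [Finset.mem_filter] at hτ
        rw [if_pos hτ.2.2]
      have hfree2 : ∑ τ ∈ S.filter (fun τ => projType c r τ = t₂ ∧ ¬ admMinus c R r τ t₁ < r),
          (if admMinus c R r τ t₁ < r then ((admMinus c R r τ t₁ : ℝ))
            else (r : ℝ) + (if (t₁, projType c r τ) ∈ Ppos
              then Efun (t₁, projType c r τ) ν / Mf (t₁, projType c r τ) ν else 0)) * ν τ
          = ((r : ℝ) + (if (t₁, t₂) ∈ Ppos
              then Efun (t₁, t₂) ν / Mf (t₁, t₂) ν else 0)) * Mf (t₁, t₂) ν := by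
        simp only [hMf]
        rw [Finset.mul_sum]
        refine Finset.sum_congr rfl fun τ hτ => ?_
        rw [Finset.mem_filter] at hτ
        rw [if_neg hτ.2.2, hτ.2.1]
      rw [hfix2, hfree2]
      have hEdef : Efun (t₁, t₂) ν
          = (∑ τ ∈ S.filter (fun τ => projType c r τ = t₁), (admPlus c R r τ t₂ : ℝ) * ν τ)
            - (∑ τ ∈ S.filter (fun τ => projType c r τ = t₂ ∧ admMinus c R r τ t₁ < r),
                (admMinus c R r τ t₁ : ℝ) * ν τ)
            - (r : ℝ) * Mf (t₁, t₂) ν := by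
        simp only [hEfun]
      by_cases hpp : (t₁, t₂) ∈ Ppos
      · rw [if_pos hpp] at *
        have hMfne : Mf (t₁, t₂) ν ≠ 0 := ne_of_gt (hMfν_pos _ hpp)
        have hexp : ((r : ℝ) + Efun (t₁, t₂) ν / Mf (t₁, t₂) ν) * Mf (t₁, t₂) ν
            = (r : ℝ) * Mf (t₁, t₂) ν + Efun (t₁, t₂) ν := by
          field_simp
        rw [hexp]
        linarith [hEdef]
      · have hpz : (t₁, t₂) ∈ Pzero := by
          rw [hPzero, Finset.mem_filter]
          refine ⟨hpP, ?_⟩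
          by_contra hne
          exact hpp (by rw [hPpos, Finset.mem_filter]; exact ⟨hpP, hne⟩)
        have hEz : Efun (t₁, t₂) ν = 0 := hEν0 _ hpz
        rw [if_neg hpp, add_zero]
        rw [hEz] at hEdef
        linarith [hEdef]
  · -- total variation
    have hsupp2 : Function.support (fun τ => |μ τ - ν τ|) ⊆ ↑S := by
      intro τ h
      rw [Function.mem_support] at h
      by_contra hc
      have h1 : μ τ = 0 := by
        by_contra h2
        exact hc ((hposS τ).1 ((hnonneg τ).lt_of_ne (Ne.symm h2)))
      rw [h1, hνoff τ hc] at h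
      simp at h
    rw [finsum_eq_sum_of_support_subset _ hsupp2]
    have hbound : ∑ τ ∈ S, |μ τ - ν τ| ≤ S.card * δ := by
      calc ∑ τ ∈ S, |μ τ - ν τ| ≤ ∑ τ ∈ S, δ :=
            Finset.sum_le_sum fun τ hτ => le_of_lt (hνclose τ hτ)
        _ = S.card * δ := by rw [Finset.sum_const, nsmul_eq_mul]
    have hδε : δ ≤ 2*ε/(S.card+1) := hδle _ (by rw [hD]; exact Finset.mem_insert_self _ _)
    have hc1 : (0:ℝ) < (S.card : ℝ) + 1 := by
      have h0 : (0:ℝ) ≤ (S.card : ℝ) := Nat.cast_nonneg _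
      linarith
    have h2 : (S.card : ℝ) * (2*ε/((S.card : ℝ)+1)) < 2*ε := by
      rw [mul_div_assoc']
      rw [div_lt_iff₀ hc1]
      nlinarith
    have h3 : (S.card : ℝ) * δ ≤ (S.card : ℝ) * (2*ε/((S.card : ℝ)+1)) :=
      mul_le_mul_of_nonneg_left hδε (Nat.cast_nonneg _)
    linarith


end MapApprox
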